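/- The relation on pairs from O_α defined by (M,N) ~ (M′,N′) iff Piv(M−N) = Piv(M′−N′) partitions O_α × O_α into classes R_{α,β} indexed by antichains β of D(α), and these relations form a symmetric association scheme on O_α: R_{α,∅} is the diagonal, each R_{α,β} is symmetric (i.e., (M,N) ∈ R_{α,β} implies (N,M) ∈ R_{α,β}), and when F is finite the intersection numbers |{L ∈ O_α : (M,L) ∈ R_{α,β}, (L,N) ∈ R_{α,γ}}| depend only on β, γ, and the class of (M,N). -/

import Mathlib

open Matrix

namespace SchubertCell

/-- The strict down-set of a subset of a poset. -/
def Down {X : Type*} [Preorder X] (Y : Set X) : Set X := {x | ∃ y ∈ Y, x < y}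

variable {F : Type*} [Field F] {n : ℕ}

/-- The pivot-set of a matrix: the maximal elements of the support
under the componentwise (product) order on indices. -/
def Piv (M : Matrix (Fin n) (Fin n) F) : Set (Fin n × Fin n) :=
  {p | M p.1 p.2 ≠ 0 ∧ ∀ q : Fin n × Fin n, p < q → M q.1 q.2 = 0}

/-- Upper triangular matrix. -/
def UpperTri (G : Matrix (Fin n) (Fin n) F) : Prop := ∀ i j : Fin n, j < i → G i j = 0

/-- `M i j` is the last (largest row index) nonzero entry of column `j`. -/
def IsLast (M : Matrix (Fin n) (Fin n) F) (i j : Fin n) : Prop :=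
  M i j ≠ 0 ∧ ∀ i' : Fin n, i < i' → M i' j = 0

/-- Reduced reverse column echelon form: (CE1), (CE2), (CE3). -/
def IsRRCEF (M : Matrix (Fin n) (Fin n) F) : Prop :=
  (∀ j j' : Fin n, j ≤ j' → (∃ i, M i j' ≠ 0) → ∃ i, M i j ≠ 0) ∧
  (∀ i j i' j' : Fin n, IsLast M i j → IsLast M i' j' → j < j' → i' < i) ∧
  (∀ i j : Fin n, IsLast M i j → M i j = 1 ∧ ∀ j' : Fin n, j' ≠ j → M i j' = 0)

/-- `D(α)`: elements of the strict down-set of `α` whose row contains no element of `α`. -/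
def DSet (α : Set (Fin n × Fin n)) : Set (Fin n × Fin n) :=
  {p | p ∈ Down α ∧ ∀ k : Fin n, (p.1, k) ∉ α}

/-- The Schubert cell: reduced reverse column echelon matrices with pivot-set `α`. -/
def OA {F : Type*} [Field F] {n : ℕ} (α : Set (Fin n × Fin n)) :
    Set (Matrix (Fin n) (Fin n) F) :=
  {M | IsRRCEF M ∧ Piv M = α}

/-! ### Auxiliary lemmas -/

section AuxGeneral

/-- Every nonzero entry lies below some pivot. -/
lemma exists_piv_ge {M : Matrix (Fin n) (Fin n) F} {q : Fin n × Fin n}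
    (hq : M q.1 q.2 ≠ 0) : ∃ p ∈ Piv M, q ≤ p := by
  classical
  let s : Finset (Fin n × Fin n) := Finset.univ.filter fun r => q ≤ r ∧ M r.1 r.2 ≠ 0
  have hqs : q ∈ s := by simp [s, hq]
  obtain ⟨p, hps, hmax⟩ := s.exists_maximal ⟨q, hqs⟩
  simp only [s, Finset.mem_filter, Finset.mem_univ, true_and] at hps
  refine ⟨p, ⟨hps.2, ?_⟩, hps.1⟩
  intro r hr
  by_contra hrne
  exact absurd (hmax (y := r) (by simp [s, le_trans hps.1 hr.le, hrne]) hr.le) hr.not_ge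

lemma piv_eq_empty_iff {M : Matrix (Fin n) (Fin n) F} : Piv M = ∅ ↔ M = 0 := by
  constructor
  · intro h
    ext i j
    by_contra hij
    obtain ⟨p, hp, -⟩ := exists_piv_ge (q := (i, j)) hij
    simp [h] at hp
  · rintro rfl
    ext p
    simp [Piv]

lemma piv_neg {M : Matrix (Fin n) (Fin n) F} : Piv (-M) = Piv M := by
  ext p
  simp [Piv]

lemma piv_sub_comm (M N : Matrix (Fin n) (Fin n) F) : Piv (M - N) = Piv (N - M) := by
  rw [show N - M = -(M - N) by abel, piv_neg]

lemma piv_antichain (M : Matrix (Fin n) (Fin n) F) : IsAntichain (· ≤ ·) (Piv M) := by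
  intro p hp q hq hne hle
  exact hq.1 (hp.2 q (lt_of_le_of_ne hle hne))

lemma isLast_unique {M : Matrix (Fin n) (Fin n) F} {i i' j : Fin n}
    (h : IsLast M i j) (h' : IsLast M i' j) : i = i' := by
  rcases lt_trichotomy i i' with hlt | heq | hlt
  · exact absurd (h.2 i' hlt) h'.1
  · exact heq
  · exact absurd (h'.2 i hlt) h.1

lemma exists_isLast {M : Matrix (Fin n) (Fin n) F} {j : Fin n}
    (h : ∃ i, M i j ≠ 0) : ∃ i, IsLast M i j := by
  classical
  obtain ⟨i, hi⟩ := h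
  let s : Finset (Fin n) := Finset.univ.filter fun r => M r j ≠ 0
  have hne : s.Nonempty := ⟨i, by simp [s, hi]⟩
  refine ⟨s.max' hne, ?_, ?_⟩
  · have := s.max'_mem hne
    simpa [s] using this
  · intro i' hi'
    by_contra hne'
    exact absurd (s.le_max' i' (by simp [s, hne'])) (not_le.2 hi')

lemma piv_eq_isLast {M : Matrix (Fin n) (Fin n) F} (hM : IsRRCEF M) :
    Piv M = {p | IsLast M p.1 p.2} := by
  ext p
  constructor
  · rintro ⟨hp1, hp2⟩
    obtain ⟨i₀, hi₀⟩ := exists_isLast ⟨p.1, hp1⟩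
    rcases lt_trichotomy p.1 i₀ with hlt | heq | hlt
    · exact absurd (hp2 (i₀, p.2) (Prod.lt_iff.2 (Or.inl ⟨hlt, le_refl _⟩))) hi₀.1
    · show IsLast M p.1 p.2
      rw [heq]; exact hi₀
    · exact absurd (hi₀.2 p.1 hlt) hp1
  · intro hp
    refine ⟨hp.1, ?_⟩
    intro q hq
    rcases eq_or_lt_of_le (show p.2 ≤ q.2 from (Prod.lt_iff.1 hq).elim (·.2) (·.2.le)) with heq | hlt
    · have h1 : p.1 < q.1 := by
        rcases Prod.lt_iff.1 hq with ⟨h, -⟩ | ⟨h, h'⟩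
        · exact h
        · exact absurd heq (ne_of_lt h')
      exact heq ▸ hp.2 q.1 h1
    · by_contra hq0
      obtain ⟨i', hi'⟩ := exists_isLast ⟨q.1, hq0⟩
      have : i' < p.1 := hM.2.1 p.1 p.2 i' q.2 hp hi' hlt
      have h1 : p.1 ≤ q.1 := (Prod.lt_iff.1 hq).elim (·.1.le) (·.1)
      exact hq0 (hi'.2 q.1 (lt_of_lt_of_le this h1))

end AuxGeneral

section AuxAlpha

variable {m : ℕ} {α : Set (Fin n × Fin n)}

lemma row_unique (hanti : IsAntichain (· ≤ ·) α) {r r' j : Fin n}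
    (h : (r, j) ∈ α) (h' : (r', j) ∈ α) : r = r' := by
  by_contra hne
  rcases le_total r r' with hle | hle
  · exact hanti h h' (by simp [Prod.ext_iff, hne]) (Prod.mk_le_mk.2 ⟨hle, le_refl _⟩)
  · exact hanti h' h (by simp [Prod.ext_iff, Ne.symm hne]) (Prod.mk_le_mk.2 ⟨hle, le_refl _⟩)

lemma col_mono (hanti : IsAntichain (· ≤ ·) α) {r c r' c' : Fin n}
    (h : (r, c) ∈ α) (h' : (r', c') ∈ α) (hcc : c < c') : r' < r := by
  by_contra hle
  push_neg at hle
  exact hanti h h' (by simp [Prod.ext_iff, ne_of_lt hcc]) (Prod.mk_le_mk.2 ⟨hle, hcc.le⟩)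

lemma exists_row_mem (hmn : m ≤ n) (hanti : IsAntichain (· ≤ ·) α)
    (hcol : ∀ p ∈ α, (p.2 : ℕ) < m) (hcard : α.ncard = m) :
    ∀ j : Fin n, (j : ℕ) < m → ∃ r : Fin n, (r, j) ∈ α := by
  classical
  have hinj : Set.InjOn Prod.snd α := by
    intro p hp q hq hpq
    by_contra hne
    rcases le_total p.1 q.1 with hle | hle
    · exact hanti hp hq hne (Prod.le_def.2 ⟨hle, hpq.le⟩)
    · exact hanti hq hp (Ne.symm hne) (Prod.le_def.2 ⟨hle, hpq.ge⟩)
  have hsub : Prod.snd '' α ⊆ Set.range (Fin.castLE hmn) := by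
    rintro j ⟨p, hp, rfl⟩
    exact ⟨⟨(p.2 : ℕ), hcol p hp⟩, by simp [Fin.ext_iff]⟩
  have hrange : (Set.range (Fin.castLE hmn)).ncard = m := by
    rw [← Set.image_univ, Set.ncard_image_of_injective _ (Fin.castLE_injective hmn),
      Set.ncard_univ, Nat.card_eq_fintype_card, Fintype.card_fin]
  have himg : Prod.snd '' α = Set.range (Fin.castLE hmn) := by
    apply Set.eq_of_subset_of_ncard_le hsub
    rw [hrange, Set.ncard_image_of_injOn hinj, hcard]
  intro j hj
  have : j ∈ Prod.snd '' α := by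
    rw [himg]
    exact ⟨⟨(j : ℕ), hj⟩, by simp [Fin.ext_iff]⟩
  obtain ⟨p, hp, hpj⟩ := this
  exact ⟨p.1, by rwa [show (p.1, j) = p by rw [← hpj]]⟩

end AuxAlpha

section AuxOA

variable {m : ℕ} {α : Set (Fin n × Fin n)}

lemma oa_isLast_iff {M : Matrix (Fin n) (Fin n) F} (hM : M ∈ OA α) {i j : Fin n} :
    (i, j) ∈ α ↔ IsLast M i j := by
  have := piv_eq_isLast hM.1
  rw [hM.2] at this
  constructor
  · intro h; have : (i, j) ∈ {p : Fin n × Fin n | IsLast M p.1 p.2} := this ▸ h; exact this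
  · intro h; have h2 : (i, j) ∈ {p : Fin n × Fin n | IsLast M p.1 p.2} := h; rw [← this] at h2
    exact h2

lemma oa_col_zero (hcol : ∀ p ∈ α, (p.2 : ℕ) < m) {M : Matrix (Fin n) (Fin n) F}
    (hM : M ∈ OA α) {j : Fin n} (hj : m ≤ (j : ℕ)) : ∀ i, M i j = 0 := by
  intro i
  by_contra h
  obtain ⟨i₀, hi₀⟩ := exists_isLast ⟨i, h⟩
  have : (i₀, j) ∈ α := (oa_isLast_iff hM).2 hi₀
  exact absurd (hcol _ this) (not_lt.2 hj)

lemma oa_row_pivot {M : Matrix (Fin n) (Fin n) F} (hM : M ∈ OA α) {i k : Fin n}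
    (hik : (i, k) ∈ α) : M i k = 1 ∧ ∀ j ≠ k, M i j = 0 := by
  have := hM.1.2.2 i k ((oa_isLast_iff hM).1 hik)
  exact ⟨this.1, fun j hj => this.2 j hj⟩

/-- The difference of two elements of the cell is supported on `D(α)`. -/
lemma sub_supp_subset (hanti : IsAntichain (· ≤ ·) α) (hcol : ∀ p ∈ α, (p.2 : ℕ) < m)
    (hex : ∀ j : Fin n, (j : ℕ) < m → ∃ r : Fin n, (r, j) ∈ α)
    {M N : Matrix (Fin n) (Fin n) F} (hM : M ∈ OA α) (hN : N ∈ OA α) :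
    ∀ i j, (M - N) i j ≠ 0 → (i, j) ∈ DSet α := by
  intro i j h
  rw [Matrix.sub_apply, sub_ne_zero] at h
  by_cases hj : (j : ℕ) < m
  · obtain ⟨r, hr⟩ := hex j hj
    have hrowfree : ∀ k, (i, k) ∉ α := by
      intro k hk
      have h1 := oa_row_pivot hM hk
      have h2 := oa_row_pivot hN hk
      by_cases hjk : j = k
      · subst hjk; exact h (h1.1.trans h2.1.symm)
      · exact h ((h1.2 j hjk).trans (h2.2 j hjk).symm)
    rcases lt_trichotomy i r with hlt | heq | hlt
    · exact ⟨⟨(r, j), hr, Prod.mk_lt_mk.2 (Or.inl ⟨hlt, le_refl _⟩)⟩, hrowfree⟩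
    · subst heq
      exact absurd ((oa_row_pivot hM hr).1.trans (oa_row_pivot hN hr).1.symm) h
    · have h1 := ((oa_isLast_iff hM).1 hr).2 i hlt
      have h2 := ((oa_isLast_iff hN).1 hr).2 i hlt
      exact absurd (h1.trans h2.symm) h
  · exact absurd ((oa_col_zero hcol hM (not_lt.1 hj) i).trans
      (oa_col_zero hcol hN (not_lt.1 hj) i).symm) h

lemma dset_struct (hanti : IsAntichain (· ≤ ·) α) (hcol : ∀ p ∈ α, (p.2 : ℕ) < m)
    {i j : Fin n} (h : (i, j) ∈ DSet α) :
    (j : ℕ) < m ∧ ∀ r, (r, j) ∈ α → i < r := by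
  obtain ⟨⟨p, hp, hlt⟩, hrow⟩ := h
  have hle := le_of_lt hlt
  have hip : i ≤ p.1 := hle.1
  have hjp : j ≤ p.2 := hle.2
  refine ⟨lt_of_le_of_lt (Fin.le_iff_val_le_val.1 hjp) (hcol p hp), ?_⟩
  intro r hr
  rcases eq_or_lt_of_le hjp with heq | hlt2
  · have hpa : (p.1, j) ∈ α := by rw [heq]; exact hp
    have hpr : r = p.1 := row_unique hanti hr hpa
    rcases eq_or_lt_of_le hip with heq1 | hlt1
    · exfalso
      have : (i, j) = p := Prod.ext_iff.2 ⟨heq1, heq⟩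
      rw [this] at hlt
      exact lt_irrefl _ hlt
    · rw [hpr]; exact hlt1
  · have : p.1 < r := col_mono hanti hr (by rwa [show (p.1, p.2) = p from rfl]) hlt2
    exact lt_of_le_of_lt hip this

/-- Adding a matrix supported on `D(α)` to an element of the cell stays in the cell. -/
lemma add_mem_OA (hanti : IsAntichain (· ≤ ·) α) (hcol : ∀ p ∈ α, (p.2 : ℕ) < m)
    (hex : ∀ j : Fin n, (j : ℕ) < m → ∃ r : Fin n, (r, j) ∈ α)
    {M E : Matrix (Fin n) (Fin n) F} (hM : M ∈ OA α)
    (hE : ∀ i j, E i j ≠ 0 → (i, j) ∈ DSet α) : M + E ∈ OA α := by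
  have hE' : ∀ i j, E i j ≠ 0 → ((j : ℕ) < m ∧ (∀ r, (r, j) ∈ α → i < r) ∧ ∀ k, (i, k) ∉ α) := by
    intro i j h
    have h1 := hE i j h
    have h2 := dset_struct hanti hcol h1
    exact ⟨h2.1, h2.2, h1.2⟩
  have hErow : ∀ i j k, (i, k) ∈ α → E i j = 0 := by
    intro i j k hk
    by_contra h
    exact (hE' i j h).2.2 k hk
  have hlast : ∀ r j : Fin n, (r, j) ∈ α → IsLast (M + E) r j := by
    intro r j hr
    constructor
    · rw [Matrix.add_apply, hErow r j j hr, add_zero, (oa_row_pivot hM hr).1]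
      exact one_ne_zero
    · intro i hi
      rw [Matrix.add_apply, ((oa_isLast_iff hM).1 hr).2 i hi, zero_add]
      by_contra h
      exact absurd ((hE' i j h).2.1 r hr) (not_lt.2 hi.le)
  have hcolzero : ∀ j : Fin n, m ≤ (j : ℕ) → ∀ i, (M + E) i j = 0 := by
    intro j hj i
    rw [Matrix.add_apply, oa_col_zero hcol hM hj i, zero_add]
    by_contra h
    exact absurd (hE' i j h).1 (not_lt.2 hj)
  have hlast_iff : ∀ i j : Fin n, IsLast (M + E) i j ↔ (i, j) ∈ α := by
    intro i j
    constructor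
    · intro h
      have hjm : (j : ℕ) < m := by
        by_contra hj
        exact h.1 (hcolzero j (not_lt.1 hj) i)
      obtain ⟨r, hr⟩ := hex j hjm
      have := isLast_unique h (hlast r j hr)
      rwa [this]
    · exact hlast i j
  have hrrcef : IsRRCEF (M + E) := by
    refine ⟨?_, ?_, ?_⟩
    · intro j j' hle ⟨i, hi⟩
      have hj' : (j' : ℕ) < m := by
        by_contra hj
        exact hi (hcolzero j' (not_lt.1 hj) i)
      have hj : (j : ℕ) < m := lt_of_le_of_lt (Fin.le_iff_val_le_val.1 hle) hj'
      obtain ⟨r, hr⟩ := hex j hj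
      exact ⟨r, (hlast r j hr).1⟩
    · intro i j i' j' h h' hjj'
      exact col_mono hanti ((hlast_iff i j).1 h) ((hlast_iff i' j').1 h') hjj'
    · intro i j h
      have hij := (hlast_iff i j).1 h
      constructor
      · rw [Matrix.add_apply, hErow i j j hij, add_zero]
        exact (oa_row_pivot hM hij).1
      · intro j' hj'
        rw [Matrix.add_apply, hErow i j' j hij, add_zero]
        exact (oa_row_pivot hM hij).2 j' hj'
  refine ⟨hrrcef, ?_⟩
  rw [piv_eq_isLast hrrcef]
  ext p
  have := hlast_iff p.1 p.2
  simpa using this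

end AuxOA

section Phi

open Classical in
/-- A choice of an element of `δ` strictly above `q`, when one exists. -/
noncomputable def pick (δ : Set (Fin n × Fin n)) (q : Fin n × Fin n) : Fin n × Fin n :=
  if h : ∃ p ∈ δ, q < p then h.choose else q

lemma pick_spec {δ : Set (Fin n × Fin n)} {q : Fin n × Fin n} (h : ∃ p ∈ δ, q < p) :
    pick δ q ∈ δ ∧ q < pick δ q := by
  rw [pick, dif_pos h]
  exact ⟨h.choose_spec.1, h.choose_spec.2⟩

open Classical in
/-- The pivot-preserving "straightening" map carrying `A` to `A'`. -/
noncomputable def phi (S δ : Set (Fin n × Fin n)) (A A' X : Matrix (Fin n) (Fin n) F) :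
    Matrix (Fin n) (Fin n) F := fun i j =>
  if (i, j) ∈ δ then A' i j * (A i j)⁻¹ * X i j
  else if (i, j) ∈ S ∧ ∃ p ∈ δ, (i, j) < p then
    X i j + (A' i j - A i j) * (A (pick δ (i, j)).1 (pick δ (i, j)).2)⁻¹ *
      X (pick δ (i, j)).1 (pick δ (i, j)).2
  else X i j

variable {S δ : Set (Fin n × Fin n)} {A A' X Y : Matrix (Fin n) (Fin n) F}

open Classical in
lemma phi_apply₁ {i j : Fin n} (h : (i, j) ∈ δ) :
    phi S δ A A' X i j = A' i j * (A i j)⁻¹ * X i j := by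
  simp only [phi]
  rw [if_pos h]

open Classical in
lemma phi_apply₂ {i j : Fin n} (h1 : (i, j) ∉ δ) (h2 : (i, j) ∈ S ∧ ∃ p ∈ δ, (i, j) < p) :
    phi S δ A A' X i j = X i j + (A' i j - A i j) * (A (pick δ (i, j)).1 (pick δ (i, j)).2)⁻¹ *
      X (pick δ (i, j)).1 (pick δ (i, j)).2 := by
  simp only [phi]
  rw [if_neg h1, if_pos h2]

open Classical in
lemma phi_apply₃ {i j : Fin n} (h1 : (i, j) ∉ δ) (h2 : ¬((i, j) ∈ S ∧ ∃ p ∈ δ, (i, j) < p)) :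
    phi S δ A A' X i j = X i j := by
  simp only [phi]
  rw [if_neg h1, if_neg h2]

lemma phi_apply₁' {q : Fin n × Fin n} (h : q ∈ δ) :
    phi S δ A A' X q.1 q.2 = A' q.1 q.2 * (A q.1 q.2)⁻¹ * X q.1 q.2 :=
  phi_apply₁ h

lemma phi_add : phi S δ A A' (X + Y) = phi S δ A A' X + phi S δ A A' Y := by
  ext i j
  rw [Matrix.add_apply]
  by_cases h1 : (i, j) ∈ δ
  · rw [phi_apply₁ h1, phi_apply₁ h1, phi_apply₁ h1, Matrix.add_apply]; ring
  · by_cases h2 : (i, j) ∈ S ∧ ∃ p ∈ δ, (i, j) < p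
    · rw [phi_apply₂ h1 h2, phi_apply₂ h1 h2, phi_apply₂ h1 h2, Matrix.add_apply,
        Matrix.add_apply]; ring
    · rw [phi_apply₃ h1 h2, phi_apply₃ h1 h2, phi_apply₃ h1 h2, Matrix.add_apply]

lemma phi_zero_iff (hδ : ∀ q ∈ δ, A q.1 q.2 ≠ 0 ∧ A' q.1 q.2 ≠ 0)
    {q : Fin n × Fin n} (hq : ∀ s, q < s → X s.1 s.2 = 0) :
    phi S δ A A' X q.1 q.2 = 0 ↔ X q.1 q.2 = 0 := by
  obtain ⟨i, j⟩ := q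
  by_cases h1 : (i, j) ∈ δ
  · rw [phi_apply₁ h1]
    constructor
    · intro h
      rcases mul_eq_zero.1 h with h | h
      · rcases mul_eq_zero.1 h with h | h
        · exact absurd h (hδ _ h1).2
        · exact absurd h (inv_ne_zero (hδ _ h1).1)
      · exact h
    · intro h; rw [h, mul_zero]
  · by_cases h2 : (i, j) ∈ S ∧ ∃ p ∈ δ, (i, j) < p
    · rw [phi_apply₂ h1 h2, hq _ (pick_spec h2.2).2, mul_zero, add_zero]
    · rw [phi_apply₃ h1 h2]

lemma phi_piv (hδ : ∀ q ∈ δ, A q.1 q.2 ≠ 0 ∧ A' q.1 q.2 ≠ 0) :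
    Piv (phi S δ A A' X) = Piv X := by
  classical
  ext q
  constructor
  · rintro ⟨hq1, hq2⟩
    have hz : ∀ s, q < s → X s.1 s.2 = 0 := by
      by_contra hcon
      push_neg at hcon
      obtain ⟨s₀, hs₀, hs₀'⟩ := hcon
      let T : Finset (Fin n × Fin n) := Finset.univ.filter fun s => q < s ∧ X s.1 s.2 ≠ 0
      have hT : T.Nonempty := ⟨s₀, by simp [T, hs₀, hs₀']⟩
      obtain ⟨t, htT, hmax⟩ := T.exists_maximal hT
      simp only [T, Finset.mem_filter, Finset.mem_univ, true_and] at htT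
      have hzt : ∀ s, t < s → X s.1 s.2 = 0 := by
        intro s hs
        by_contra h
        exact absurd (hmax (y := s) (by simp [T, lt_trans htT.1 hs, h]) hs.le) hs.not_ge
      exact htT.2 ((phi_zero_iff hδ hzt).1 (hq2 t htT.1))
    exact ⟨fun h => hq1 ((phi_zero_iff hδ hz).2 h), hz⟩
  · rintro ⟨hq1, hq2⟩
    refine ⟨fun h => hq1 ((phi_zero_iff hδ hq2).1 h), ?_⟩
    intro s hs
    have hz : ∀ t, s < t → X t.1 t.2 = 0 := fun t ht => hq2 t (lt_trans hs ht)
    exact (phi_zero_iff hδ hz).2 (hq2 s hs)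

lemma phi_self (hδ : ∀ q ∈ δ, A q.1 q.2 ≠ 0 ∧ A' q.1 q.2 ≠ 0)
    (hPA : Piv A = δ) (hPA' : Piv A' = δ)
    (hSA : ∀ i j, A i j ≠ 0 → (i, j) ∈ S) (hSA' : ∀ i j, A' i j ≠ 0 → (i, j) ∈ S) :
    phi S δ A A' A = A' := by
  ext i j
  by_cases h1 : (i, j) ∈ δ
  · rw [phi_apply₁ h1, mul_assoc, inv_mul_cancel₀ (hδ _ h1).1, mul_one]
  · by_cases h2 : (i, j) ∈ S ∧ ∃ p ∈ δ, (i, j) < p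
    · rw [phi_apply₂ h1 h2, mul_assoc, inv_mul_cancel₀ (hδ _ (pick_spec h2.2).1).1, mul_one]
      ring
    · rw [phi_apply₃ h1 h2]
      have hzero : ∀ (B : Matrix (Fin n) (Fin n) F), Piv B = δ →
          (∀ i' j', B i' j' ≠ 0 → (i', j') ∈ S) → B i j = 0 := by
        intro B hPB hSB
        by_contra h
        obtain ⟨p, hp, hle⟩ := exists_piv_ge (q := (i, j)) h
        rcases eq_or_lt_of_le hle with heq | hlt
        · exact h1 (heq ▸ (hPB ▸ hp))
        · exact h2 ⟨hSB i j h, p, hPB ▸ hp, hlt⟩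
      rw [hzero A hPA hSA, hzero A' hPA' hSA']

lemma phi_inv (hδ : ∀ q ∈ δ, A q.1 q.2 ≠ 0 ∧ A' q.1 q.2 ≠ 0) :
    phi S δ A' A (phi S δ A A' X) = X := by
  ext i j
  by_cases h1 : (i, j) ∈ δ
  · rw [phi_apply₁ h1, phi_apply₁ h1]
    field_simp [(hδ _ h1).1, (hδ _ h1).2]
  · by_cases h2 : (i, j) ∈ S ∧ ∃ p ∈ δ, (i, j) < p
    · have hp := pick_spec h2.2
      rw [phi_apply₂ h1 h2, phi_apply₂ h1 h2, phi_apply₁' hp.1]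
      have hA := (hδ _ hp.1).1
      have hA' := (hδ _ hp.1).2
      field_simp
      ring
    · rw [phi_apply₃ h1 h2, phi_apply₃ h1 h2]

lemma phi_supp (hδS : δ ⊆ S) (hX : ∀ i j, X i j ≠ 0 → (i, j) ∈ S) :
    ∀ i j, phi S δ A A' X i j ≠ 0 → (i, j) ∈ S := by
  intro i j h
  by_contra hS
  rw [phi_apply₃ (fun hc => hS (hδS hc)) (fun hc => hS hc.1)] at h
  exact hS (hX i j h)

end Phi

theorem schubert_cell_association_scheme {F : Type*} [Field F] [Fintype F] {n m : ℕ}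
    (hm1 : 1 ≤ m) (hm2 : m ≤ n - 1)
    (α : Set (Fin n × Fin n)) (hanti : IsAntichain (· ≤ ·) α)
    (hcol : ∀ p ∈ α, (p.2 : ℕ) < m) (hcard : α.ncard = m) :
    (∀ M N : Matrix (Fin n) (Fin n) F, M ∈ OA α → N ∈ OA α →
        IsAntichain (· ≤ ·) (Piv (M - N)) ∧ Piv (M - N) ⊆ DSet α) ∧
    (∀ M N : Matrix (Fin n) (Fin n) F, M ∈ OA α → N ∈ OA α →
        (Piv (M - N) = ∅ ↔ M = N)) ∧
    (∀ M N : Matrix (Fin n) (Fin n) F, M ∈ OA α → N ∈ OA α →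
        Piv (M - N) = Piv (N - M)) ∧
    (∀ β γ : Set (Fin n × Fin n), IsAntichain (· ≤ ·) β → β ⊆ DSet α →
      IsAntichain (· ≤ ·) γ → γ ⊆ DSet α →
      ∀ M N M' N' : Matrix (Fin n) (Fin n) F,
        M ∈ OA α → N ∈ OA α → M' ∈ OA α → N' ∈ OA α →
        Piv (M - N) = Piv (M' - N') →
        Set.ncard {L | L ∈ OA α ∧ Piv (M - L) = β ∧ Piv (L - N) = γ} =
        Set.ncard {L | L ∈ OA α ∧ Piv (M' - L) = β ∧ Piv (L - N') = γ}) := by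
  have hmn : m ≤ n := le_trans hm2 (Nat.sub_le n 1)
  have hex := exists_row_mem hmn hanti hcol hcard
  have hsupp : ∀ M N : Matrix (Fin n) (Fin n) F, M ∈ OA α → N ∈ OA α →
      ∀ i j, (M - N) i j ≠ 0 → (i, j) ∈ DSet α :=
    fun M N hM hN => sub_supp_subset hanti hcol hex hM hN
  refine ⟨?_, ?_, ?_, ?_⟩
  · intro M N hM hN
    refine ⟨piv_antichain _, ?_⟩
    intro p hp
    have := hsupp M N hM hN p.1 p.2 hp.1
    simpa using this
  · intro M N _ _
    rw [piv_eq_empty_iff, sub_eq_zero]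
  · intro M N _ _
    exact piv_sub_comm M N
  · intro β γ _ _ _ _ M N M' N' hM hN hM' hN' hPiv
    set S := DSet α with hSdef
    set δ := Piv (M - N) with hδdef
    have key : ∀ (P Q P' Q' L : Matrix (Fin n) (Fin n) F), P ∈ OA α → Q ∈ OA α →
        P' ∈ OA α → Q' ∈ OA α → L ∈ OA α → Piv (P - Q) = δ → Piv (P' - Q') = δ →
        (P' + phi S δ (P - Q) (P' - Q') (L - P)) ∈ OA α ∧
        Piv (P' - (P' + phi S δ (P - Q) (P' - Q') (L - P))) = Piv (P - L) ∧
        Piv ((P' + phi S δ (P - Q) (P' - Q') (L - P)) - Q') = Piv (L - Q) := by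
      intro P Q P' Q' L hP hQ hP' hQ' hL hPQ hPQ'
      have hδB : ∀ q ∈ δ, (P - Q) q.1 q.2 ≠ 0 ∧ (P' - Q') q.1 q.2 ≠ 0 := by
        intro q hq
        exact ⟨(hPQ ▸ hq : q ∈ Piv (P - Q)).1, (hPQ' ▸ hq : q ∈ Piv (P' - Q')).1⟩
      have hsB : ∀ i j, (P - Q) i j ≠ 0 → (i, j) ∈ S := hsupp P Q hP hQ
      have hsB' : ∀ i j, (P' - Q') i j ≠ 0 → (i, j) ∈ S := hsupp P' Q' hP' hQ'
      have hsLP : ∀ i j, (L - P) i j ≠ 0 → (i, j) ∈ S := hsupp L P hL hP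
      have hδS : δ ⊆ S := by
        intro q hq
        have h1 : (P - Q) q.1 q.2 ≠ 0 := (hδB q hq).1
        have := hsB q.1 q.2 h1
        simpa using this
      refine ⟨?_, ?_, ?_⟩
      · exact add_mem_OA hanti hcol hex hP' (phi_supp hδS hsLP)
      · rw [sub_add_cancel_left, piv_neg, phi_piv hδB, ← neg_sub P L, piv_neg]
      · have e1 : (P' + phi S δ (P - Q) (P' - Q') (L - P)) - Q' =
            phi S δ (P - Q) (P' - Q') (L - P) + (P' - Q') := by abel
        have e3 := phi_add (S := S) (δ := δ) (A := P - Q) (A' := P' - Q')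
          (X := L - P) (Y := P - Q)
        rw [sub_add_sub_cancel] at e3
        have e4 : phi S δ (P - Q) (P' - Q') (L - P) + (P' - Q') =
            phi S δ (P - Q) (P' - Q') (L - Q) := by
          rw [e3, phi_self hδB hPQ hPQ' hsB hsB']
        rw [e1, e4, phi_piv hδB]
    have hδB : ∀ q ∈ δ, (M - N) q.1 q.2 ≠ 0 ∧ (M' - N') q.1 q.2 ≠ 0 := by
      intro q hq
      exact ⟨(hq : q ∈ Piv (M - N)).1, (hPiv ▸ hq : q ∈ Piv (M' - N')).1⟩
    have hδB' : ∀ q ∈ δ, (M' - N') q.1 q.2 ≠ 0 ∧ (M - N) q.1 q.2 ≠ 0 :=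
      fun q hq => ⟨(hδB q hq).2, (hδB q hq).1⟩
    set Φ : Matrix (Fin n) (Fin n) F → Matrix (Fin n) (Fin n) F :=
      fun L => M' + phi S δ (M - N) (M' - N') (L - M) with hΦ
    set Φ' : Matrix (Fin n) (Fin n) F → Matrix (Fin n) (Fin n) F :=
      fun L' => M + phi S δ (M' - N') (M - N) (L' - M') with hΦ'
    have hleft : ∀ L, Φ' (Φ L) = L := by
      intro L
      simp only [hΦ, hΦ', add_sub_cancel_left]
      rw [phi_inv hδB, add_sub_cancel]
    have hright : ∀ L', Φ (Φ' L') = L' := by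
      intro L'
      simp only [hΦ, hΦ', add_sub_cancel_left]
      rw [phi_inv hδB', add_sub_cancel]
    have hmapsto : Set.MapsTo Φ {L | L ∈ OA α ∧ Piv (M - L) = β ∧ Piv (L - N) = γ}
        {L | L ∈ OA α ∧ Piv (M' - L) = β ∧ Piv (L - N') = γ} := by
      rintro L ⟨hL, hb, hc⟩
      obtain ⟨k1, k2, k3⟩ := key M N M' N' L hM hN hM' hN' hL rfl hPiv.symm
      exact ⟨k1, by rw [hΦ]; rw [k2, hb], by rw [hΦ]; rw [k3, hc]⟩
    have hmapsto' : Set.MapsTo Φ' {L | L ∈ OA α ∧ Piv (M' - L) = β ∧ Piv (L - N') = γ}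
        {L | L ∈ OA α ∧ Piv (M - L) = β ∧ Piv (L - N) = γ} := by
      rintro L' ⟨hL', hb, hc⟩
      obtain ⟨k1, k2, k3⟩ := key M' N' M N L' hM' hN' hM hN hL' hPiv.symm rfl
      exact ⟨k1, by rw [hΦ']; rw [k2, hb], by rw [hΦ']; rw [k3, hc]⟩
    have hbij : Set.BijOn Φ {L | L ∈ OA α ∧ Piv (M - L) = β ∧ Piv (L - N) = γ}
        {L | L ∈ OA α ∧ Piv (M' - L) = β ∧ Piv (L - N') = γ} :=
      Set.InvOn.bijOn ⟨fun L _ => hleft L, fun L' _ => hright L'⟩ hmapsto hmapsto'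
    rw [← hbij.image_eq, Set.ncard_image_of_injOn hbij.injOn]

end SchubertCell
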